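/- Let a > 0 and b ∈ ℝ, or a = 0 and b ≥ 0, and let w : [0,∞) → [0,∞) be a non-decreasing unbounded function with w(t) = exp(t^a (log(e+t))^b) for all sufficiently large t. Then w satisfies condition (ε)₀, i.e., ∫₀^∞ w(t) e^{-μt} dt < ∞ for all μ > 0, if and only if either 0 ≤ a < 1, or a = 1 and b < 0. -/

import Mathlib

open Real Filter MeasureTheory Set

lemma key0 {c : ℝ} (hc : 0 < c) (b : ℝ) :
    Tendsto (fun x : ℝ => x ^ c * Real.log x ^ b) atTop atTop := by
  have h2 : 0 < c / 2 := by linarith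
  have hlo := (isLittleO_log_rpow_rpow_atTop (-b) h2).bound one_pos
  refine tendsto_atTop_mono' _ ?_ (tendsto_rpow_atTop h2)
  filter_upwards [hlo, eventually_ge_atTop (Real.exp 1)] with x hx hex
  have he1 : (1:ℝ) < Real.exp 1 := by
    have := Real.add_one_le_exp (1:ℝ); linarith
  have hx0 : (0:ℝ) < x := lt_trans one_pos (lt_of_lt_of_le he1 hex)
  have hlx : (1:ℝ) ≤ Real.log x := by
    rw [Real.le_log_iff_exp_le hx0]; simpa using hex
  have hlxb : 0 < Real.log x ^ (-b) := Real.rpow_pos_of_pos (by linarith) _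
  have hxc2 : 0 < x ^ (c/2) := Real.rpow_pos_of_pos hx0 _
  rw [Real.norm_eq_abs, Real.norm_eq_abs, abs_of_pos hlxb, abs_of_pos hxc2, one_mul] at hx
  -- x^(c/2) ≤ x^c * (log x)^b
  have hrec : Real.log x ^ b = (Real.log x ^ (-b))⁻¹ := by
    rw [← Real.rpow_neg (by linarith : (0:ℝ) ≤ Real.log x), neg_neg]
  have hxc : x ^ c = x ^ (c/2) * x ^ (c/2) := by
    rw [← Real.rpow_add hx0]; ring_nf
  calc x ^ (c/2) = x ^ (c/2) * (x ^ (c/2) * (x ^ (c/2))⁻¹) := by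
        rw [mul_inv_cancel₀ hxc2.ne', mul_one]
    _ ≤ x ^ (c/2) * (x ^ (c/2) * (Real.log x ^ (-b))⁻¹) := by
        have := inv_anti₀ hlxb hx
        gcongr
    _ = x ^ c * Real.log x ^ b := by rw [hxc, hrec]; ring

lemma key1 {c : ℝ} (hc : c < 0) (b : ℝ) :
    Tendsto (fun x : ℝ => x ^ c * Real.log x ^ b) atTop (nhds 0) := by
  have h := (key0 (c := -c) (by linarith) (-b)).inv_tendsto_atTop
  refine h.congr' ?_
  filter_upwards [eventually_ge_atTop (Real.exp 1)] with x hex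
  have he1 : (1:ℝ) < Real.exp 1 := by
    have := Real.add_one_le_exp (1:ℝ); linarith
  have hx0 : (0:ℝ) < x := lt_trans one_pos (lt_of_lt_of_le he1 hex)
  have hlx : (1:ℝ) ≤ Real.log x := by
    rw [Real.le_log_iff_exp_le hx0]; simpa using hex
  simp only [Pi.inv_apply, mul_inv]
  rw [← Real.rpow_neg hx0.le, ← Real.rpow_neg (by linarith), neg_neg, neg_neg]

lemma two_le_exp_one : (2:ℝ) ≤ Real.exp 1 := by
  have := Real.add_one_le_exp (1:ℝ); linarith

lemma sandwich (b : ℝ) {t : ℝ} (ht : Real.exp 1 ≤ t) :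
    min (2 ^ b) 1 * Real.log t ^ b ≤ Real.log (Real.exp 1 + t) ^ b ∧
    Real.log (Real.exp 1 + t) ^ b ≤ max (2 ^ b) 1 * Real.log t ^ b := by
  have he2 := two_le_exp_one
  have ht0 : (0:ℝ) < t := by linarith
  have hlt : (1:ℝ) ≤ Real.log t := by rw [Real.le_log_iff_exp_le ht0]; exact ht
  have hlt0 : (0:ℝ) < Real.log t := by linarith
  have hltb : (0:ℝ) ≤ Real.log t ^ b := Real.rpow_nonneg hlt0.le _
  have h1 : Real.log t ≤ Real.log (Real.exp 1 + t) :=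
    Real.log_le_log ht0 (by linarith)
  have h1' : (0:ℝ) < Real.log (Real.exp 1 + t) := by linarith
  have h2 : Real.log (Real.exp 1 + t) ≤ 2 * Real.log t := by
    have ht' : Real.exp 1 + t ≤ t * t := by nlinarith
    calc Real.log (Real.exp 1 + t) ≤ Real.log (t * t) :=
          Real.log_le_log (by positivity) ht'
      _ = 2 * Real.log t := by rw [Real.log_mul ht0.ne' ht0.ne']; ring
  have h2rpow : (2 * Real.log t) ^ b = 2 ^ b * Real.log t ^ b :=
    Real.mul_rpow (by norm_num) hlt0.le
  rcases le_or_gt 0 b with hb | hb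
  · constructor
    · calc min (2 ^ b) 1 * Real.log t ^ b ≤ 1 * Real.log t ^ b := by
            gcongr
            · exact min_le_right _ _
        _ = Real.log t ^ b := one_mul _
        _ ≤ Real.log (Real.exp 1 + t) ^ b := Real.rpow_le_rpow hlt0.le h1 hb
    · calc Real.log (Real.exp 1 + t) ^ b ≤ (2 * Real.log t) ^ b :=
            Real.rpow_le_rpow h1'.le h2 hb
        _ = 2 ^ b * Real.log t ^ b := h2rpow
        _ ≤ max (2 ^ b) 1 * Real.log t ^ b := by
            gcongr
            · exact le_max_left _ _
  · constructor
    · calc min (2 ^ b) 1 * Real.log t ^ b ≤ 2 ^ b * Real.log t ^ b := by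
            gcongr
            · exact min_le_left _ _
        _ = (2 * Real.log t) ^ b := h2rpow.symm
        _ ≤ Real.log (Real.exp 1 + t) ^ b :=
            Real.rpow_le_rpow_of_nonpos h1' h2 hb.le
    · calc Real.log (Real.exp 1 + t) ^ b ≤ Real.log t ^ b :=
            Real.rpow_le_rpow_of_nonpos hlt0 h1 hb.le
        _ ≤ max (2 ^ b) 1 * Real.log t ^ b := by
            nlinarith [le_max_right (2 ^ b) (1:ℝ)]

lemma lemA {a b : ℝ} (hab : a < 1 ∨ (a = 1 ∧ b < 0)) :
    Tendsto (fun t : ℝ => t ^ (a - 1) * Real.log (Real.exp 1 + t) ^ b)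
      atTop (nhds 0) := by
  have he2 := two_le_exp_one
  rcases hab with ha | ⟨ha, hb⟩
  · have hkey := (key1 (c := a - 1) (by linarith) b).const_mul (max (2 ^ b) 1)
    rw [mul_zero] at hkey
    have h0 : Tendsto (fun _ : ℝ => (0:ℝ)) atTop (nhds 0) := tendsto_const_nhds
    refine tendsto_of_tendsto_of_tendsto_of_le_of_le' h0 hkey ?_ ?_
    · filter_upwards [eventually_ge_atTop (Real.exp 1)] with t ht
      have ht0 : (0:ℝ) < t := by linarith
      have : (0:ℝ) < Real.log (Real.exp 1 + t) := Real.log_pos (by linarith)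
      positivity
    · filter_upwards [eventually_ge_atTop (Real.exp 1)] with t ht
      have ht0 : (0:ℝ) < t := by linarith
      have h := (sandwich b ht).2
      calc t ^ (a-1) * Real.log (Real.exp 1 + t) ^ b
          ≤ t ^ (a-1) * (max (2 ^ b) 1 * Real.log t ^ b) := by
            gcongr
        _ = max (2 ^ b) 1 * (t ^ (a-1) * Real.log t ^ b) := by ring
  · subst ha
    have hlog : Tendsto (fun t : ℝ => Real.log (Real.exp 1 + t)) atTop atTop :=
      Real.tendsto_log_atTop.comp (tendsto_atTop_add_const_left _ _ tendsto_id)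
    have htd := (tendsto_rpow_neg_atTop (y := -b) (by linarith)).comp hlog
    simp only [neg_neg] at htd
    refine htd.congr' ?_
    filter_upwards [eventually_gt_atTop 0] with t ht
    simp [Function.comp, Real.rpow_zero, sub_self, ht.ne']

lemma lemB {a b : ℝ} (hab : 1 < a ∨ (a = 1 ∧ 0 ≤ b)) :
    ∀ᶠ t : ℝ in atTop, 1 ≤ t ^ (a - 1) * Real.log (Real.exp 1 + t) ^ b := by
  have he2 := two_le_exp_one
  rcases hab with ha | ⟨ha, hb⟩
  · have hc : (0:ℝ) < min (2 ^ b) 1 := lt_min (by positivity) one_pos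
    have hkey := (key0 (c := a - 1) (by linarith) b).const_mul_atTop hc
    filter_upwards [hkey.eventually_ge_atTop 1, eventually_ge_atTop (Real.exp 1)]
      with t h1 ht
    have ht0 : (0:ℝ) < t := by linarith
    have h := (sandwich b ht).1
    calc (1:ℝ) ≤ min (2 ^ b) 1 * (t ^ (a-1) * Real.log t ^ b) := h1
      _ = t ^ (a-1) * (min (2 ^ b) 1 * Real.log t ^ b) := by ring
      _ ≤ t ^ (a-1) * Real.log (Real.exp 1 + t) ^ b := by
          gcongr
  · subst ha
    filter_upwards [eventually_gt_atTop 0] with t ht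
    have h1 : (1:ℝ) ≤ Real.log (Real.exp 1 + t) := by
      rw [Real.le_log_iff_exp_le (by positivity)]; linarith
    have h2 : (1:ℝ) ≤ Real.log (Real.exp 1 + t) ^ b := by
      calc (1:ℝ) = 1 ^ b := (Real.one_rpow b).symm
        _ ≤ _ := Real.rpow_le_rpow (by norm_num) h1 hb
    simpa [sub_self, Real.rpow_zero] using h2

theorem stmt_6 (a b : ℝ) (hab : (0 < a) ∨ (a = 0 ∧ 0 ≤ b)) (w : ℝ → ℝ)
    (hmono : MonotoneOn w (Set.Ici 0))
    (hpos : ∀ t ≥ (0:ℝ), 0 ≤ w t)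
    (hunb : ∀ C : ℝ, ∃ t ≥ (0:ℝ), C ≤ w t)
    (hw : ∃ T : ℝ, ∀ t ≥ T,
      w t = Real.exp (t ^ a * (Real.log (Real.exp 1 + t)) ^ b)) :
    (∀ μ > (0:ℝ), MeasureTheory.IntegrableOn
        (fun t => w t * Real.exp (-μ * t)) (Set.Ioi (0:ℝ)))
      ↔ (a < 1 ∨ (a = 1 ∧ b < 0)) := by
  obtain ⟨T, hT⟩ := hw
  constructor
  · intro h
    by_contra hcon
    push_neg at hcon
    obtain ⟨h1, h2⟩ := hcon
    have hB : 1 < a ∨ (a = 1 ∧ 0 ≤ b) := by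
      rcases lt_or_eq_of_le h1 with h | h
      · exact Or.inl h
      · exact Or.inr ⟨h.symm, h2 h.symm⟩
    obtain ⟨T₁, hT₁⟩ := eventually_atTop.mp (lemB hB)
    set T₂ := max (max T T₁) 1 with hT₂def
    have hT₂1 : (1:ℝ) ≤ T₂ := le_max_right _ _
    have key : ∀ t > T₂, (1:ℝ) ≤ w t * Real.exp (-1 * t) := by
      intro t ht
      have ht0 : (0:ℝ) < t := by
        have : (1:ℝ) ≤ t := le_of_lt (lt_of_le_of_lt hT₂1 ht)
        linarith
      have htT : T ≤ t := le_trans (le_trans (le_max_left _ _) (le_max_left _ _)) ht.le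
      have htT₁ : T₁ ≤ t := le_trans (le_trans (le_max_right _ _) (le_max_left _ _)) ht.le
      rw [hT t htT, ← Real.exp_add]
      have hge := hT₁ t htT₁
      have hrw : t ^ a = t ^ (a - 1) * t := by
        have := Real.rpow_add_one ht0.ne' (a - 1)
        rwa [sub_add_cancel] at this
      have : t ≤ t ^ a * Real.log (Real.exp 1 + t) ^ b := by
        rw [hrw]
        calc t = 1 * t := (one_mul t).symm
          _ ≤ (t ^ (a-1) * Real.log (Real.exp 1 + t) ^ b) * t := by
              gcongr
          _ = t ^ (a-1) * t * Real.log (Real.exp 1 + t) ^ b := by ring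
      exact Real.one_le_exp (by linarith)
    have hI := (h 1 one_pos).mono_set
      (Ioi_subset_Ioi (by linarith : (0:ℝ) ≤ T₂))
    have hconst : IntegrableOn (fun _ : ℝ => (1:ℝ)) (Ioi T₂) := by
      refine hI.integrable.mono aestronglyMeasurable_const ?_
      rw [ae_restrict_iff' measurableSet_Ioi]
      filter_upwards with t ht
      have hk := key t ht
      have hwt : 0 ≤ w t := hpos t (by
        have : (1:ℝ) ≤ t := le_of_lt (lt_of_le_of_lt hT₂1 ht); linarith)
      rw [Real.norm_eq_abs, Real.norm_eq_abs, abs_one,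
        abs_of_nonneg (mul_nonneg hwt (Real.exp_nonneg _))]
      exact hk
    rw [integrableOn_const_iff] at hconst
    rcases hconst with h' | h'
    · norm_num at h'
    · rw [Real.volume_Ioi] at h'; exact absurd h' (lt_irrefl _)
  · intro hcond μ hμ
    have hev : ∀ᶠ t : ℝ in atTop,
        t ^ (a - 1) * Real.log (Real.exp 1 + t) ^ b ≤ μ / 2 :=
      ((lemA hcond).eventually_lt_const (half_pos hμ)).mono fun t ht => ht.le
    obtain ⟨T₁, hT₁⟩ := eventually_atTop.mp hev
    set T₂ := max (max T T₁) 1 with hT₂def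
    have hT₂1 : (1:ℝ) ≤ T₂ := le_max_right _ _
    have hT₂0 : (0:ℝ) ≤ T₂ := by linarith
    -- measurability
    have hWmono : Monotone (fun t : ℝ => w (max t 0)) := by
      intro s t hst
      exact hmono (mem_Ici.mpr (le_max_right _ _)) (mem_Ici.mpr (le_max_right _ _))
        (max_le_max hst le_rfl)
    have hmeas : AEStronglyMeasurable (fun t => w t * Real.exp (-μ * t))
        (volume.restrict (Ioi (0:ℝ))) := by
      have hm : Measurable fun t : ℝ => w (max t 0) * Real.exp (-μ * t) :=
        hWmono.measurable.mul
          (Real.continuous_exp.comp (continuous_const.mul continuous_id)).measurable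
      refine hm.aestronglyMeasurable.congr ?_
      rw [EventuallyEq, ae_restrict_iff' measurableSet_Ioi]
      filter_upwards with t ht
      rw [max_eq_left (le_of_lt ht)]
    have hIoc : IntegrableOn (fun t => w t * Real.exp (-μ * t)) (Ioc 0 T₂) := by
      have hconst : IntegrableOn (fun _ : ℝ => w T₂) (Ioc 0 T₂) :=
        (integrableOn_const_iff (by finiteness)).mpr (Or.inr measure_Ioc_lt_top)
      refine Integrable.mono' hconst
        (hmeas.mono_measure (Measure.restrict_mono Ioc_subset_Ioi_self le_rfl)) ?_
      rw [ae_restrict_iff' measurableSet_Ioc]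
      filter_upwards with t ht
      have hwt : 0 ≤ w t := hpos t ht.1.le
      rw [Real.norm_eq_abs, abs_of_nonneg (mul_nonneg hwt (Real.exp_nonneg _))]
      calc w t * Real.exp (-μ * t) ≤ w T₂ * 1 := by
            apply mul_le_mul
            · exact hmono (mem_Ici.mpr ht.1.le) (mem_Ici.mpr hT₂0) ht.2
            · rw [Real.exp_le_one_iff]
              have := ht.1.le
              nlinarith
            · exact Real.exp_nonneg _
            · exact hpos T₂ hT₂0
        _ = w T₂ := mul_one _
    have hIoi : IntegrableOn (fun t => w t * Real.exp (-μ * t)) (Ioi T₂) := by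
      have hint : IntegrableOn (fun t : ℝ => Real.exp (-(μ/2) * t)) (Ioi T₂) :=
        exp_neg_integrableOn_Ioi _ (half_pos hμ)
      refine Integrable.mono' hint
        (hmeas.mono_measure (Measure.restrict_mono
          (Ioi_subset_Ioi (by linarith)) le_rfl)) ?_
      rw [ae_restrict_iff' measurableSet_Ioi]
      filter_upwards with t ht
      have ht0 : (0:ℝ) < t := lt_of_lt_of_le (by linarith) ht.le
      have htT : T ≤ t := le_trans (le_trans (le_max_left _ _) (le_max_left _ _)) ht.le
      have htT₁ : T₁ ≤ t := le_trans (le_trans (le_max_right _ _) (le_max_left _ _)) ht.le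
      rw [hT t htT, ← Real.exp_add, Real.norm_eq_abs, abs_of_nonneg (Real.exp_nonneg _)]
      apply Real.exp_le_exp.mpr
      have hge := hT₁ t htT₁
      have hrw : t ^ a = t ^ (a - 1) * t := by
        have := Real.rpow_add_one ht0.ne' (a - 1)
        rwa [sub_add_cancel] at this
      have hx : t ^ a * Real.log (Real.exp 1 + t) ^ b ≤ (μ/2) * t := by
        rw [hrw]
        calc t ^ (a-1) * t * Real.log (Real.exp 1 + t) ^ b
            = (t ^ (a-1) * Real.log (Real.exp 1 + t) ^ b) * t := by ring
          _ ≤ (μ/2) * t := by gcongr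
      nlinarith
    refine (hIoc.union hIoi).mono_set ?_
    rw [Ioc_union_Ioi_eq_Ioi hT₂0]
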